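/- arXiv:1504.03390 — 2 statements merged into one kernel-verified Lean document; each statement's English description precedes it below -/
import Mathlib

section
/- Let (W_t)_{t≥0} be a standard one-dimensional Brownian motion on (Ω, F, P). Fix 0 ≤ s < t and let (π_n)_{n≥1} be a sequence of partitions π_n = {s = t_{n,0} < t_{n,1} < ⋯ < t_{n,m_n} = t} of [s,t] with mesh tending to 0, with Σ_{n=1}^∞ ‖π_n‖ < ∞, and nested in the sense that π_n ⊆ π_{n+1} for all n ≥ 1. Then the total-variation sums satisfy Σ_{j=1}^{m_n} |W_{t_{n,j}} − W_{t_{n,j−1}}| → ∞ almost surely as n → ∞. In particular, almost surely the sample paths of W have infinite variation on [s,t]. -/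
open MeasureTheory Filter Topology Set
open scoped NNReal ENNReal

open Real ProbabilityTheory

lemma gauss_integrable_pow (k : ℕ) (v : ℝ≥0) :
    Integrable (fun x : ℝ => x ^ k) (gaussianReal 0 v) := by
  by_cases hv : v = 0
  · subst hv
    rw [gaussianReal_zero_var]
    refine ⟨by fun_prop, ?_⟩
    rw [HasFiniteIntegral, lintegral_dirac]
    exact ENNReal.coe_lt_top
  · rw [gaussianReal_of_var_ne_zero _ hv]
    rw [integrable_withDensity_iff (measurable_gaussianPDF _ _)
      (ae_of_all _ fun x => ENNReal.ofReal_lt_top)]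
    have : ∀ x : ℝ, x ^ k * (gaussianPDF 0 v x).toReal
        = (√(2 * π * v))⁻¹ * (x ^ (k:ℝ) * rexp (-(2 * (v:ℝ))⁻¹ * x ^ 2)) := by
      intro x
      rw [gaussianPDF, ENNReal.toReal_ofReal (gaussianPDFReal_nonneg _ _ _), gaussianPDFReal,
        Real.rpow_natCast, sub_zero,
        show -x^2/(2*(v:ℝ)) = -(2*(v:ℝ))⁻¹ * x^2 from by ring]
      ring
    simp_rw [this]
    refine Integrable.const_mul ?_ _
    refine integrable_rpow_mul_exp_neg_mul_sq ?_ ?_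
    · have : (0:ℝ) < v := by positivity
      positivity
    · linarith [Nat.cast_nonneg (α := ℝ) k]

noncomputable def kap (k : ℕ) : ℝ := ∫ x, x ^ k ∂(gaussianReal 0 1)

lemma kap2_pos : 0 < kap 2 := by
  rw [kap, integral_pos_iff_support_of_nonneg (fun x => sq_nonneg x) (gauss_integrable_pow 2 1)]
  have hsupp : Function.support (fun x : ℝ => x ^ 2) = {(0:ℝ)}ᶜ := by
    ext x; simp [Function.support, pow_eq_zero_iff]
  rw [hsupp]
  have h0 : gaussianReal 0 1 {(0:ℝ)} = 0 :=
    gaussianReal_absolutelyContinuous 0 one_ne_zero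
      (measure_singleton (μ := (volume : Measure ℝ)) 0)
  have := measure_compl (μ := gaussianReal 0 1) (measurableSet_singleton (0:ℝ)) (by simp [h0])
  rw [this, h0]
  simp

lemma kap_nonneg (k : ℕ) : 0 ≤ kap (2 * k) := by
  rw [kap]
  refine integral_nonneg fun x => ?_
  rw [pow_mul]
  positivity

lemma gauss_moment_scale (k : ℕ) (v : ℝ≥0) :
    ∫ x, x ^ k ∂(gaussianReal 0 v) = (Real.sqrt v) ^ k * kap k := by
  have hc : ((⟨(Real.sqrt v)^2, sq_nonneg _⟩ : ℝ≥0) * 1) = v := by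
    ext
    simp [Real.sq_sqrt (NNReal.coe_nonneg v)]
  have hmap := gaussianReal_map_mul_const (μ := 0) (v := 1) (Real.sqrt v)
  rw [mul_zero] at hmap; erw [hc] at hmap
  rw [← hmap, integral_map (by fun_prop) (by fun_prop)]
  simp_rw [mul_pow]
  rw [integral_mul_const]
  rw [kap, mul_comm]

/-- Along a nested sequence of partitions of `[s,t]` with summable mesh tending to `0`,
the total-variation sums of Brownian motion tend to `∞` almost surely. -/
theorem brownian_infinite_variation
    {Ω : Type*} [MeasurableSpace Ω] (P : Measure Ω) [IsProbabilityMeasure P]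
    (W : ℝ≥0 → Ω → ℝ)
    (hmeas : ∀ u, Measurable (W u))
    (h0 : ∀ᵐ ω ∂P, W 0 ω = 0)
    (hgauss : ∀ u v : ℝ≥0, u ≤ v →
      Measure.map (fun ω => W v ω - W u ω) P = ProbabilityTheory.gaussianReal 0 (v - u))
    (hindep : ∀ u r v w : ℝ≥0, u ≤ r → r ≤ v → v ≤ w →
      ProbabilityTheory.IndepFun (fun ω => W w ω - W v ω) (fun ω => W r ω - W u ω) P)
    (hcont : ∀ᵐ ω ∂P, Continuous fun u : ℝ≥0 => W u ω)
    (s t : ℝ≥0) (hst : s < t)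
    (m : ℕ → ℕ) (τ : ℕ → ℕ → ℝ≥0)
    (hm : ∀ n, 1 ≤ m n)
    (hfirst : ∀ n, τ n 0 = s) (hlast : ∀ n, τ n (m n) = t)
    (hmono : ∀ n, ∀ j < m n, τ n j < τ n (j + 1))
    (hmesh : Tendsto (fun n => (Finset.range (m n)).sup fun j => τ n (j + 1) - τ n j)
      atTop (𝓝 0))
    (hsum : Summable fun n => (Finset.range (m n)).sup fun j => τ n (j + 1) - τ n j)
    (hnested : ∀ n, ∀ j ≤ m n, ∃ k ≤ m (n + 1), τ (n + 1) k = τ n j) :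
    ∀ᵐ ω ∂P, Tendsto
      (fun n => ∑ j ∈ Finset.range (m n), |W (τ n (j + 1)) ω - W (τ n j) ω|)
      atTop atTop := by
  classical
  set mesh : ℕ → ℝ≥0 := fun n => (Finset.range (m n)).sup fun j => τ n (j + 1) - τ n j
    with hmeshdef
  set X : ℕ → ℕ → Ω → ℝ := fun n j ω => W (τ n (j + 1)) ω - W (τ n j) ω with hXdef
  set Δ : ℕ → ℕ → ℝ≥0 := fun n j => τ n (j + 1) - τ n j with hΔdef
  set c : ℝ := (t : ℝ) - s with hcdef
  have hcpos : 0 < c := sub_pos.mpr (by exact_mod_cast hst)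
  set a : ℝ := kap 2 * c with hadef
  have hapos : 0 < a := mul_pos kap2_pos hcpos
  -- monotonicity of partition points
  have hmono' : ∀ n, ∀ j k, j ≤ k → k ≤ m n → τ n j ≤ τ n k := by
    intro n j k hjk hkm
    induction k with
    | zero =>
      have : j = 0 := Nat.le_zero.mp hjk
      simp [this]
    | succ k ih =>
      rcases Nat.lt_or_ge j (k + 1) with h | h
      · exact le_trans (ih (Nat.lt_succ_iff.mp h) (le_trans (Nat.le_succ k) hkm))
          (hmono n k (by omega)).le
      · have : j = k + 1 := le_antisymm hjk h
        simp [this]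
  have hτt : ∀ n, ∀ j ≤ m n, τ n j ≤ t := by
    intro n j hj
    rw [← hlast n]
    exact hmono' n j (m n) hj le_rfl
  -- coercion of Δ
  have hΔcoe : ∀ n, ∀ j < m n, ((Δ n j : ℝ)) = (τ n (j + 1) : ℝ) - τ n j := fun n j hj =>
    NNReal.coe_sub (hmono n j hj).le
  have hΔsum : ∀ n, ∑ j ∈ Finset.range (m n), ((Δ n j : ℝ)) = c := by
    intro n
    rw [Finset.sum_congr rfl fun j hj => hΔcoe n j (Finset.mem_range.1 hj),
      Finset.sum_range_sub (fun j => (τ n j : ℝ)), hfirst, hlast]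
  have hΔle : ∀ n, ∀ j < m n, Δ n j ≤ mesh n := fun n j hj =>
    Finset.le_sup (f := fun j => τ n (j + 1) - τ n j) (Finset.mem_range.2 hj)
  -- measurability and laws
  have hXmeas : ∀ n j, Measurable (X n j) := fun n j => (hmeas _).sub (hmeas _)
  have hlaw : ∀ n, ∀ j < m n, Measure.map (X n j) P = gaussianReal 0 (Δ n j) :=
    fun n j hj => hgauss _ _ (hmono n j hj).le
  have hXint : ∀ n j (k : ℕ), j < m n → Integrable (fun ω => X n j ω ^ k) P := by
    intro n j k hj
    have h1 : Integrable (fun x : ℝ => x ^ k) (Measure.map (X n j) P) := by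
      rw [hlaw n j hj]; exact gauss_integrable_pow k _
    rw [integrable_map_measure (by fun_prop) (hXmeas n j).aemeasurable] at h1
    exact h1
  have hXmom : ∀ n j (k : ℕ), j < m n →
      ∫ ω, X n j ω ^ k ∂P = (Real.sqrt (Δ n j)) ^ k * kap k := by
    intro n j k hj
    rw [← integral_map (hXmeas n j).aemeasurable (f := fun x : ℝ => x ^ k) (by fun_prop),
      hlaw n j hj, gauss_moment_scale]
  have hXsq_mem : ∀ n, ∀ j < m n, MemLp (fun ω => X n j ω ^ 2) 2 P := by
    intro n j hj
    refine (memLp_two_iff_integrable_sq ((hXmeas n j).pow_const 2).aestronglyMeasurable).mpr ?_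
    simpa [← pow_mul] using hXint n j 4 hj
  -- pairwise independence of squared increments
  have hkey : ∀ n i j, i < j → j < m n → IndepFun (X n i) (X n j) P := by
    intro n i j hij hj
    exact (hindep (τ n i) (τ n (i + 1)) (τ n j) (τ n (j + 1))
      (hmono n i (by omega)).le (hmono' n (i + 1) j hij (by omega)) (hmono n j hj).le).symm
  have hindep2 : ∀ n, Set.Pairwise ↑(Finset.range (m n))
      fun i j => IndepFun (fun ω => X n i ω ^ 2) (fun ω => X n j ω ^ 2) P := by
    intro n i hi j hj hij
    simp only [Finset.coe_range, Set.mem_Iio] at hi hj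
    have : IndepFun (X n i) (X n j) P := by
      rcases lt_or_gt_of_ne hij with h | h
      · exact hkey n i j h hj
      · exact (hkey n j i h hi).symm
    exact this.comp (measurable_id.pow_const 2) (measurable_id.pow_const 2)
  -- Q and its statistics
  set Q : ℕ → Ω → ℝ := fun n ω => ∑ j ∈ Finset.range (m n), X n j ω ^ 2 with hQdef
  have hQsum : ∀ n, Q n = ∑ j ∈ Finset.range (m n), (fun ω => X n j ω ^ 2) := by
    intro n; ext ω; simp [hQdef, Finset.sum_apply]
  have hQmem : ∀ n, MemLp (Q n) 2 P := by
    intro n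
    rw [hQsum n]
    exact memLp_finset_sum' _ fun j hj => hXsq_mem n j (Finset.mem_range.1 hj)
  have hEQ : ∀ n, ∫ ω, Q n ω ∂P = a := by
    intro n
    rw [hQdef]
    simp only
    rw [integral_finset_sum _ fun j hj => hXint n j 2 (Finset.mem_range.1 hj)]
    have : ∀ j ∈ Finset.range (m n), ∫ ω, X n j ω ^ 2 ∂P = (Δ n j : ℝ) * kap 2 := by
      intro j hj
      rw [hXmom n j 2 (Finset.mem_range.1 hj), Real.sq_sqrt (NNReal.coe_nonneg _)]
    rw [Finset.sum_congr rfl this, ← Finset.sum_mul, hΔsum, hadef, mul_comm]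
  have hvarX : ∀ n, ∀ j < m n,
      variance (fun ω => X n j ω ^ 2) P ≤ kap 4 * (Δ n j : ℝ) ^ 2 := by
    intro n j hj
    rw [variance_eq_sub (hXsq_mem n j hj)]
    have h4 : ∫ ω, ((fun ω => X n j ω ^ 2) ^ 2) ω ∂P = (Δ n j : ℝ) ^ 2 * kap 4 := by
      simp only [Pi.pow_apply]
      have hpow : ∀ ω, (X n j ω ^ 2) ^ 2 = X n j ω ^ 4 := fun ω => by ring
      simp_rw [hpow]
      rw [hXmom n j 4 hj]
      rw [show (Real.sqrt (Δ n j)) ^ 4 = ((Real.sqrt (Δ n j)) ^ 2) ^ 2 from by ring,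
        Real.sq_sqrt (NNReal.coe_nonneg _)]
    have h2 : ∫ ω, (fun ω => X n j ω ^ 2) ω ∂P = (Δ n j : ℝ) * kap 2 := by
      simp only
      rw [hXmom n j 2 hj, Real.sq_sqrt (NNReal.coe_nonneg _)]
    rw [h4, h2]
    nlinarith [sq_nonneg ((Δ n j : ℝ) * kap 2)]
  have hk4 : 0 ≤ kap 4 := by simpa using kap_nonneg 2
  have hvarQ : ∀ n, variance (Q n) P ≤ kap 4 * c * (mesh n : ℝ) := by
    intro n
    rw [hQsum n, IndepFun.variance_sum (fun j hj => hXsq_mem n j (Finset.mem_range.1 hj))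
      (hindep2 n)]
    calc ∑ j ∈ Finset.range (m n), variance (fun ω => X n j ω ^ 2) P
        ≤ ∑ j ∈ Finset.range (m n), kap 4 * ((mesh n : ℝ) * (Δ n j : ℝ)) := by
          refine Finset.sum_le_sum fun j hj => ?_
          refine le_trans (hvarX n j (Finset.mem_range.1 hj)) ?_
          have hle : (Δ n j : ℝ) ≤ (mesh n : ℝ) :=
            NNReal.coe_le_coe.mpr (hΔle n j (Finset.mem_range.1 hj))
          have : (Δ n j : ℝ) ^ 2 ≤ (mesh n : ℝ) * (Δ n j : ℝ) := by
            nlinarith [NNReal.coe_nonneg (Δ n j)]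
          nlinarith
      _ = kap 4 * c * (mesh n : ℝ) := by
          rw [← Finset.mul_sum, ← Finset.mul_sum, hΔsum]
          ring
  -- integrability of G n = (Q n - a)^2
  have hQmeasb : ∀ n, Measurable (Q n) := by
    intro n
    rw [hQdef]
    exact Finset.measurable_sum _ fun j _ => (hXmeas n j).pow_const 2
  have hGmeas : ∀ n, Measurable fun ω => (Q n ω - a) ^ 2 :=
    fun n => ((hQmeasb n).sub measurable_const).pow_const 2
  have hGint : ∀ n, Integrable (fun ω => (Q n ω - a) ^ 2) P := by
    intro n
    exact ((hQmem n).sub (memLp_const a)).integrable_sq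
  have hGeq : ∀ n, ∫ ω, (Q n ω - a) ^ 2 ∂P = variance (Q n) P := by
    intro n
    rw [variance_eq_integral (hQmeasb n).aemeasurable]
    rw [hEQ n]
  -- Borel–Cantelli style argument
  have key : ∀ᵐ ω ∂P, Tendsto (fun n => (Q n ω - a) ^ 2) atTop (𝓝 0) := by
    have hfin : ∫⁻ ω, ∑' n, ENNReal.ofReal ((Q n ω - a) ^ 2) ∂P < ⊤ := by
      rw [lintegral_tsum fun n => ((hGmeas n).ennreal_ofReal).aemeasurable]
      have hb : ∀ n, ∫⁻ ω, ENNReal.ofReal ((Q n ω - a) ^ 2) ∂P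
          ≤ ENNReal.ofReal (kap 4 * c) * (mesh n : ℝ≥0∞) := by
        intro n
        rw [← ofReal_integral_eq_lintegral_ofReal (hGint n) (ae_of_all _ fun ω => sq_nonneg _)]
        calc ENNReal.ofReal (∫ ω, (Q n ω - a) ^ 2 ∂P)
            ≤ ENNReal.ofReal (kap 4 * c * (mesh n : ℝ)) := by
              refine ENNReal.ofReal_le_ofReal ?_
              rw [hGeq n]; exact hvarQ n
          _ = ENNReal.ofReal (kap 4 * c) * (mesh n : ℝ≥0∞) := by
              rw [ENNReal.ofReal_mul (mul_nonneg hk4 hcpos.le), ENNReal.ofReal_coe_nnreal]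
      calc ∑' n, ∫⁻ ω, ENNReal.ofReal ((Q n ω - a) ^ 2) ∂P
          ≤ ∑' n, ENNReal.ofReal (kap 4 * c) * (mesh n : ℝ≥0∞) := ENNReal.tsum_le_tsum hb
        _ = ENNReal.ofReal (kap 4 * c) * ∑' n, (mesh n : ℝ≥0∞) := ENNReal.tsum_mul_left
        _ < ⊤ := ENNReal.mul_lt_top ENNReal.ofReal_lt_top
            (ENNReal.tsum_coe_ne_top_iff_summable.mpr hsum).lt_top
    have hfmeas : Measurable fun ω => ∑' n, ENNReal.ofReal ((Q n ω - a) ^ 2) :=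
      Measurable.ennreal_tsum fun n => (hGmeas n).ennreal_ofReal
    filter_upwards [ae_lt_top hfmeas hfin.ne] with ω hω
    have h1 := ENNReal.tendsto_atTop_zero_of_tsum_ne_top hω.ne
    have h2 := (ENNReal.tendsto_toReal (by simp : (0:ℝ≥0∞) ≠ ⊤)).comp h1
    rw [show (fun n => (Q n ω - a) ^ 2)
        = ENNReal.toReal ∘ (fun n => ENNReal.ofReal ((Q n ω - a) ^ 2))
      from funext fun n => (ENNReal.toReal_ofReal (sq_nonneg _)).symm]
    simpa using h2
  -- combine with continuity
  filter_upwards [key, hcont] with ω hQω hcω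
  rw [tendsto_atTop]
  intro b
  set C : ℝ := max b 1 with hCdef
  have hC : 0 < C := lt_of_lt_of_le one_pos (le_max_right b 1)
  set ε : ℝ := a / (2 * C) with hεdef
  have hε : 0 < ε := by positivity
  -- uniform continuity on [0, t]
  have hK : IsCompact (Icc (0 : ℝ≥0) t) := isCompact_Icc
  have huc := hK.uniformContinuousOn_of_continuous hcω.continuousOn
  rw [Metric.uniformContinuousOn_iff] at huc
  obtain ⟨δ, hδ, hδ'⟩ := huc ε hε
  have hev1 : ∀ᶠ n in atTop, mesh n < δ.toNNReal :=
    hmesh.eventually_lt_const (Real.toNNReal_pos.mpr hδ)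
  have hev2 : ∀ᶠ n in atTop, (Q n ω - a) ^ 2 < (a / 2) ^ 2 :=
    hQω.eventually_lt_const (by positivity)
  filter_upwards [hev1, hev2] with n h1 h2
  have hQhalf : a / 2 ≤ Q n ω := by nlinarith
  have hXabs : ∀ j < m n, |X n j ω| ≤ ε := by
    intro j hj
    have hj1 : τ n j ∈ Icc (0 : ℝ≥0) t := ⟨zero_le, hτt n j (by omega)⟩
    have hj2 : τ n (j + 1) ∈ Icc (0 : ℝ≥0) t := ⟨zero_le, hτt n (j + 1) (by omega)⟩
    have hdist : dist (τ n (j + 1)) (τ n j) < δ := by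
      rw [NNReal.dist_eq,
        abs_of_nonneg (sub_nonneg.mpr (NNReal.coe_le_coe.mpr (hmono n j hj).le)),
        ← hΔcoe n j hj]
      calc (Δ n j : ℝ) ≤ (mesh n : ℝ) := NNReal.coe_le_coe.mpr (hΔle n j hj)
        _ < (δ.toNNReal : ℝ) := NNReal.coe_lt_coe.mpr h1
        _ ≤ δ := le_of_eq (Real.coe_toNNReal δ hδ.le)
    have := hδ' _ hj2 _ hj1 hdist
    rw [Real.dist_eq] at this
    exact this.le
  have hQle : Q n ω ≤ ε * ∑ j ∈ Finset.range (m n), |X n j ω| := by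
    rw [hQdef, Finset.mul_sum]
    simp only
    refine Finset.sum_le_sum fun j hj => ?_
    have h := hXabs j (Finset.mem_range.1 hj)
    calc X n j ω ^ 2 = |X n j ω| * |X n j ω| := by rw [← sq_abs]; ring
      _ ≤ ε * |X n j ω| := mul_le_mul_of_nonneg_right h (abs_nonneg _)
  have hεC : ε * C = a / 2 := by
    rw [hεdef]; field_simp
  have hCV : C ≤ ∑ j ∈ Finset.range (m n), |X n j ω| := by
    have h3 : ε * C ≤ ε * ∑ j ∈ Finset.range (m n), |X n j ω| := by
      rw [hεC]; exact le_trans hQhalf hQle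
    exact le_of_mul_le_mul_left h3 hε
  exact le_trans (le_max_left b 1) hCV
end

section
/- Let (Ω, F, (F_t)_{t≥0}, P) be a filtered probability space, fix 0 ≤ t₀ < t < ∞, and let X = (X_s) be a real-valued process, progressively measurable with respect to (F_t)_{t≥0}, such that E[∫_{t₀}^{t} |X_s|² ds] < ∞. Then there exists a sequence (X^n)_{n≥1} of adapted step processes on [t₀, t], each satisfying E[∫_{t₀}^{t} |X^n_s|² ds] < ∞, such that E[∫_{t₀}^{t} |X_s − X^n_s|² ds] → 0 as n → ∞. -/
open MeasureTheory Filter Topology Set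
open scoped NNReal ENNReal

set_option maxHeartbeats 1000000

noncomputable def trunc (M x : ℝ) : ℝ := max (-M) (min x M)

lemma trunc_eq_self {M x : ℝ} (h : |x| ≤ M) : trunc M x = x := by
  rw [abs_le] at h; simp [trunc, h.1, h.2, max_eq_right, min_eq_left]

lemma abs_trunc_le {M : ℝ} (hM : 0 ≤ M) (x : ℝ) : |trunc M x| ≤ M := by
  rw [abs_le]; unfold trunc
  constructor
  · exact le_max_left _ _
  · exact max_le (by linarith) (min_le_right _ _)

lemma abs_sub_trunc_le (M x : ℝ) (hM : 0 ≤ M) : |x - trunc M x| ≤ |x| := by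
  unfold trunc
  rcases le_total x (-M) with h | h
  · rw [max_eq_left (le_trans (min_le_left _ _) h)]
    rw [abs_of_nonpos (by linarith), abs_of_nonpos (by linarith)]; linarith
  · rcases le_total M x with h2 | h2
    · rw [min_eq_right h2, max_eq_right (by linarith)]
      rw [abs_of_nonneg (by linarith), abs_of_nonneg (by linarith)]; linarith
    · rw [min_eq_left h2, max_eq_right h]; simp [abs_nonneg]

lemma continuous_trunc (M : ℝ) : Continuous (trunc M) := by
  unfold trunc; fun_prop

lemma sq_le_three_sq {x a b c : ℝ} (ha : 0 ≤ a) (hb : 0 ≤ b) (hc : 0 ≤ c)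
    (h : |x| ≤ a + b + c) : x ^ 2 ≤ 3 * (a ^ 2 + b ^ 2 + c ^ 2) := by
  nlinarith [sq_abs x, abs_nonneg x, sq_nonneg (a - b), sq_nonneg (a - c), sq_nonneg (b - c)]

noncomputable def avg (f : ℝ → ℝ) (h x : ℝ) : ℝ := h⁻¹ * ∫ u in Ioc (x - h) x, f u

noncomputable def hseq (n : ℕ) : ℝ := ((n : ℝ) + 1)⁻¹

lemma hseq_pos (n : ℕ) : 0 < hseq n := by unfold hseq; positivity

lemma hseq_tendsto : Tendsto hseq atTop (𝓝 0) := by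
  have := tendsto_one_div_add_atTop_nhds_zero_nat (𝕜 := ℝ)
  rw [show hseq = fun n : ℕ => 1 / ((n : ℝ) + 1) from funext fun n => by simp [hseq]]; exact this

lemma abs_avg_le {f : ℝ → ℝ} {M h : ℝ} (hf : Integrable f) (hM : ∀ x, |f x| ≤ M) (hh : 0 < h)
    (x : ℝ) : |avg f h x| ≤ M := by
  have hM0 : 0 ≤ M := le_trans (abs_nonneg _) (hM x)
  have hb : ‖∫ u in Ioc (x - h) x, f u‖ ≤ M * (volume (Ioc (x - h) x)).toReal := by
    apply norm_setIntegral_le_of_norm_le_const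
    · rw [Real.volume_Ioc]; exact ENNReal.ofReal_lt_top
    · intro u _; exact hM u
  rw [Real.volume_Ioc, ENNReal.toReal_ofReal (by linarith)] at hb
  have hx : x - (x - h) = h := by ring
  rw [hx] at hb
  rw [avg, abs_mul, abs_of_nonneg (inv_nonneg.2 hh.le)]
  calc h⁻¹ * |∫ u in Ioc (x - h) x, f u| ≤ h⁻¹ * (M * h) :=
        mul_le_mul_of_nonneg_left hb (inv_nonneg.2 hh.le)
    _ = M := by field_simp

lemma abs_avg_sub_avg_le {f : ℝ → ℝ} {M h : ℝ} (hf : Integrable f) (hM : ∀ x, |f x| ≤ M)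
    (hh : 0 < h) (x y : ℝ) : |avg f h x - avg f h y| ≤ 2 * M * |x - y| / h := by
  have hint : ∀ a b : ℝ, IntervalIntegrable f volume a b := fun a b => hf.intervalIntegrable
  have key : ∀ z : ℝ, (∫ u in Ioc (z - h) z, f u) = ∫ u in (z - h)..z, f u := by
    intro z; rw [intervalIntegral.integral_of_le (by linarith)]
  have split : (∫ u in (x - h)..x, f u) =
      (∫ u in (x - h)..(y - h), f u) + (∫ u in (y - h)..y, f u) + (∫ u in y..x, f u) := by
    rw [intervalIntegral.integral_add_adjacent_intervals (hint _ _) (hint _ _),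
      intervalIntegral.integral_add_adjacent_intervals (hint _ _) (hint _ _)]
  have b1 : ‖∫ u in (x - h)..(y - h), f u‖ ≤ M * |y - h - (x - h)| :=
    intervalIntegral.norm_integral_le_of_norm_le_const (fun u _ => hM u)
  have b2 : ‖∫ u in y..x, f u‖ ≤ M * |x - y| :=
    intervalIntegral.norm_integral_le_of_norm_le_const (fun u _ => hM u)
  have hyx : y - h - (x - h) = -(x - y) := by ring
  rw [hyx, abs_neg] at b1
  rw [avg, avg, key, key, split]
  have : h⁻¹ * ((∫ u in (x - h)..(y - h), f u) + (∫ u in (y - h)..y, f u) + ∫ u in y..x, f u) -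
      h⁻¹ * ∫ u in (y - h)..y, f u =
      h⁻¹ * ((∫ u in (x - h)..(y - h), f u) + ∫ u in y..x, f u) := by ring
  rw [this, abs_mul, abs_of_nonneg (inv_nonneg.2 hh.le)]
  rw [div_eq_mul_inv, mul_comm (2 * M * |x - y|) h⁻¹]
  apply mul_le_mul_of_nonneg_left _ (inv_nonneg.2 hh.le)
  calc |(∫ u in (x - h)..(y - h), f u) + ∫ u in y..x, f u| ≤
      ‖∫ u in (x - h)..(y - h), f u‖ + ‖∫ u in y..x, f u‖ := abs_add_le _ _
    _ ≤ M * |x - y| + M * |x - y| := add_le_add b1 b2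
    _ = 2 * M * |x - y| := by ring

lemma ae_tendsto_avg {f : ℝ → ℝ} (hf : Integrable f) :
    ∀ᵐ x : ℝ, Tendsto (fun n => avg f (hseq n) x) atTop (𝓝 (f x)) := by
  have H := IsUnifLocDoublingMeasure.ae_tendsto_average_norm_sub (μ := (volume : Measure ℝ))
    hf.locallyIntegrable 2
  filter_upwards [H] with x hx
  have hδ : Tendsto (fun n : ℕ => hseq n / 2) atTop (𝓝[>] 0) := by
    apply tendsto_nhdsWithin_of_tendsto_nhds_of_eventually_within
    · simpa using hseq_tendsto.div_const 2
    · exact Eventually.of_forall fun n => by have := hseq_pos n; simp [mem_Ioi]; positivity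
  have hball : ∀ᶠ n : ℕ in atTop,
      x ∈ Metric.closedBall (x - hseq n / 2) (2 * (hseq n / 2)) := by
    apply Eventually.of_forall
    intro n
    have := hseq_pos n
    rw [Metric.mem_closedBall, Real.dist_eq]
    rw [abs_of_nonneg (by linarith : (0:ℝ) ≤ x - (x - hseq n / 2))]
    linarith
  have hx2 := hx (fun n => x - hseq n / 2) (fun n => hseq n / 2) hδ hball
  have key : ∀ n : ℕ, ‖avg f (hseq n) x - f x‖ ≤
      ⨍ y in Metric.closedBall (x - hseq n / 2) (hseq n / 2), ‖f y - f x‖ := by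
    intro n
    set h := hseq n with hdef
    have hh : 0 < h := hseq_pos n
    have hball_eq : Metric.closedBall (x - h / 2) (h / 2) = Icc (x - h) x := by
      rw [Real.closedBall_eq_Icc]
      congr 1 <;> ring
    have hvol : (volume (Icc (x - h) x)).toReal = h := by
      rw [Real.volume_Icc, ENNReal.toReal_ofReal (by linarith)]; ring
    have hIoc : (∫ u in Ioc (x - h) x, f u) = ∫ u in Icc (x - h) x, f u :=
      (integral_Icc_eq_integral_Ioc).symm
    have hconst : (∫ _ in Icc (x - h) x, f x) = h * f x := by
      rw [setIntegral_const, measureReal_def, hvol, smul_eq_mul]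
    have hsub : avg f h x - f x = h⁻¹ * ∫ u in Icc (x - h) x, (f u - f x) := by
      rw [integral_sub (hf.integrableOn) (integrableOn_const (ne_of_lt ?_)), hconst]
      · rw [avg, hIoc]; field_simp
      · rw [Real.volume_Icc]; exact ENNReal.ofReal_lt_top
    rw [hball_eq, setAverage_eq, measureReal_def, hvol, smul_eq_mul, hsub]
    rw [norm_mul, norm_inv, Real.norm_of_nonneg hh.le]
    apply mul_le_mul_of_nonneg_left _ (inv_nonneg.2 hh.le)
    calc ‖∫ u in Icc (x - h) x, (f u - f x)‖ ≤ ∫ u in Icc (x - h) x, ‖f u - f x‖ :=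
          norm_integral_le_integral_norm _
      _ = _ := rfl
  have hz : Tendsto (fun n => avg f (hseq n) x - f x) atTop (𝓝 0) :=
    squeeze_zero_norm key hx2
  have := hz.add_const (f x)
  simpa using this

lemma prodMS_mono {α β : Type*} {ma : MeasurableSpace α} {m1 m2 : MeasurableSpace β}
    (h : m1 ≤ m2) : ma.prod m1 ≤ ma.prod m2 :=
  sup_le_sup le_rfl (MeasurableSpace.comap_mono h)

lemma measurable_proj_comp {Ω : Type*} [mΩ : MeasurableSpace Ω] {u : ℝ} (hu : 0 ≤ u)
    {X : ℝ → Ω → ℝ}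
    (h : Measurable fun p : Set.Icc (0:ℝ) u × Ω => X (↑p.1) p.2) :
    Measurable fun p : ℝ × Ω => X (Set.projIcc 0 u hu p.1) p.2 := by
  have hφ : Measurable fun p : ℝ × Ω => ((Set.projIcc 0 u hu p.1, p.2) : Set.Icc (0:ℝ) u × Ω) :=
    ((continuous_projIcc (h := hu)).measurable.comp measurable_fst).prodMk measurable_snd
  exact h.comp hφ

lemma adapted_e_meas {Ω : Type*} [mΩ : MeasurableSpace Ω] {u : ℝ} (hu : 0 ≤ u) {X : ℝ → Ω → ℝ}
    (hX : Measurable fun p : Set.Icc (0:ℝ) u × Ω => X (↑p.1) p.2)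
    (MR : ℝ) (S : Set ℝ) (hS : MeasurableSet S) (T : Set ℝ) (c : ℝ) :
    Measurable fun ω =>
      c * ∫ v in T, S.indicator (fun v => trunc MR (X (Set.projIcc 0 u hu v) ω)) v := by
  apply Measurable.const_mul
  have hjoint : Measurable fun q : Ω × ℝ =>
      S.indicator (fun v => trunc MR (X (Set.projIcc 0 u hu v) q.1)) q.2 := by
    have : Measurable fun q : Ω × ℝ => trunc MR (X (Set.projIcc 0 u hu q.2) q.1) :=
      (continuous_trunc MR).measurable.comp
        ((measurable_proj_comp hu hX).comp (measurable_snd.prodMk measurable_fst))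
    have h2 : Measurable fun q : Ω × ℝ =>
        (Prod.snd ⁻¹' S).indicator (fun q : Ω × ℝ => trunc MR (X (Set.projIcc 0 u hu q.2) q.1)) q :=
      this.indicator (hS.preimage measurable_snd)
    have heq : (fun q : Ω × ℝ => S.indicator (fun v => trunc MR (X (Set.projIcc 0 u hu v) q.1)) q.2)
        = fun q : Ω × ℝ => (Prod.snd ⁻¹' S).indicator
            (fun q : Ω × ℝ => trunc MR (X (Set.projIcc 0 u hu q.2) q.1)) q := by
      funext q
      by_cases hq : q.2 ∈ S
      · rw [Set.indicator_of_mem hq, Set.indicator_of_mem (show q ∈ Prod.snd ⁻¹' S from hq)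
          (fun q : Ω × ℝ => trunc MR (X (Set.projIcc 0 u hu q.2) q.1))]
      · rw [Set.indicator_of_notMem hq, Set.indicator_of_notMem
          (show q ∉ Prod.snd ⁻¹' S from hq)
          (fun q : Ω × ℝ => trunc MR (X (Set.projIcc 0 u hu q.2) q.1))]
    rw [heq]
    exact h2
  exact (hjoint.stronglyMeasurable.integral_prod_right').measurable

lemma avg_eq_translate (f : ℝ → ℝ) {h : ℝ} (hh : 0 < h) (x : ℝ) :
    avg f h x = h⁻¹ * ∫ v in Ioc (-h) 0, f (v + x) := by
  rw [avg, ← intervalIntegral.integral_of_le (by linarith : x - h ≤ x),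
     ← intervalIntegral.integral_of_le (by linarith : -h ≤ (0:ℝ))]
  congr 1
  rw [intervalIntegral.integral_comp_add_right f x]
  norm_num
  congr 1
  ring

lemma measurable_avg_joint {Ω : Type*} [mΩ : MeasurableSpace Ω] {g : Ω → ℝ → ℝ}
    (hg : Measurable fun q : Ω × ℝ => g q.1 q.2) {h : ℝ} (hh : 0 < h) :
    Measurable fun q : Ω × ℝ => avg (g q.1) h q.2 := by
  have heq : (fun q : Ω × ℝ => avg (g q.1) h q.2) =
      fun q : Ω × ℝ => h⁻¹ * ∫ v in Ioc (-h) 0, g q.1 (v + q.2) := by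
    funext q; exact avg_eq_translate _ hh _
  rw [heq]
  apply Measurable.const_mul
  have hj : Measurable fun r : (Ω × ℝ) × ℝ => g r.1.1 (r.2 + r.1.2) :=
    hg.comp ((measurable_fst.comp measurable_fst).prodMk
      (measurable_snd.add (measurable_snd.comp measurable_fst)))
  exact (hj.stronglyMeasurable.integral_prod_right').measurable

lemma indicator_comp_snd {Ω : Type*} (S : Set ℝ) (f : Ω × ℝ → ℝ) :
    (fun q : Ω × ℝ => S.indicator (fun u => f (q.1, u)) q.2)
      = fun q : Ω × ℝ => (Prod.snd ⁻¹' S).indicator f q := by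
  funext q
  by_cases hq : q.2 ∈ S
  · rw [Set.indicator_of_mem hq, Set.indicator_of_mem (show q ∈ Prod.snd ⁻¹' S from hq)]
  · rw [Set.indicator_of_notMem hq,
      Set.indicator_of_notMem (show q ∉ Prod.snd ⁻¹' S from hq)]

lemma key_step
    {Ω : Type*} {m : MeasurableSpace Ω} {P : Measure Ω} [IsProbabilityMeasure P]
    (F : Filtration ℝ m) (t₀ t : ℝ) (ht₀ : 0 ≤ t₀) (htt : t₀ < t)
    (X : ℝ → Ω → ℝ)
    (hprog : ∀ u : ℝ, 0 ≤ u →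
      Measurable[(inferInstance : MeasurableSpace (Set.Icc (0:ℝ) u)).prod (F u)]
        (fun p : Set.Icc (0:ℝ) u × Ω => X (↑p.1) p.2))
    (hX : ∫⁻ ω, (∫⁻ s in Set.Ioc t₀ t, ENNReal.ofReal ((X s ω) ^ 2)) ∂P < ⊤)
    (ε : ℝ) (hε : 0 < ε) :
    ∃ Yn : ℝ → Ω → ℝ,
      (∃ (k : ℕ) (pt : ℕ → ℝ) (e : ℕ → Ω → ℝ),
        0 < k ∧ pt 0 = t₀ ∧ pt k = t ∧ (∀ i < k, pt i < pt (i + 1)) ∧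
        (∀ i < k, Measurable[F (pt i)] (e i)) ∧
        (∀ s ω, Yn s ω =
          ∑ i ∈ Finset.range k,
            Set.indicator (Set.Ico (pt i) (pt (i + 1))) (fun _ => e i ω) s)) ∧
      (∫⁻ ω, (∫⁻ s in Set.Ioc t₀ t, ENNReal.ofReal ((Yn s ω) ^ 2)) ∂P < ⊤) ∧
      (∫⁻ ω, (∫⁻ s in Set.Ioc t₀ t, ENNReal.ofReal ((X s ω - Yn s ω) ^ 2)) ∂P
        < ENNReal.ofReal ε) := by
  classical
  have h0t : (0:ℝ) ≤ t := le_trans ht₀ htt.le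
  set Ap : Ω × ℝ → ℝ := fun p => X (Set.projIcc 0 t h0t p.2) p.1 with hApdef
  have hAp : Measurable Ap := by
    have h1 : Measurable[(inferInstance : MeasurableSpace ℝ).prod (F t)]
        (fun p : ℝ × Ω => X (Set.projIcc 0 t h0t p.1) p.2) :=
      measurable_proj_comp (mΩ := F t) h0t (hprog t h0t)
    have h2 : Measurable (fun p : ℝ × Ω => X (Set.projIcc 0 t h0t p.1) p.2) :=
      h1.mono (prodMS_mono (F.le t)) le_rfl
    exact h2.comp measurable_swap
  have hApt : ∀ (ω : Ω) {s : ℝ}, s ∈ Icc 0 t → Ap (ω, s) = X s ω := by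
    intro ω s hs
    rw [hApdef]
    simp only
    rw [Set.projIcc_of_mem h0t hs]
  have hmemIcc : ∀ s ∈ Ioc t₀ t, s ∈ Icc (0:ℝ) t := fun s hs =>
    ⟨le_trans ht₀ hs.1.le, hs.2⟩
  -- the dominating function
  set B : Ω → ℝ≥0∞ := fun ω => ∫⁻ s in Ioc t₀ t, ENNReal.ofReal ((Ap (ω, s))^2) with hBdef
  have hBcongr : ∀ ω, B ω = ∫⁻ s in Ioc t₀ t, ENNReal.ofReal ((X s ω)^2) := fun ω =>
    setLIntegral_congr_fun measurableSet_Ioc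
      (fun s hs => by rw [hApt ω (hmemIcc s hs)])
  have hB_lt : ∫⁻ ω, B ω ∂P < ⊤ := by
    rw [lintegral_congr hBcongr]; exact hX
  have hBmeas : Measurable B := by
    apply Measurable.lintegral_prod_right
    exact (hAp.pow_const 2).ennreal_ofReal
  -- truncation errors
  set J : ℕ → Ω → ℝ≥0∞ := fun M ω =>
    ∫⁻ s in Ioc t₀ t, ENNReal.ofReal ((Ap (ω,s) - trunc M (Ap (ω,s)))^2) with hJdef
  have hJmeas : ∀ Mn : ℕ, Measurable (J Mn) := by
    intro Mn
    apply Measurable.lintegral_prod_right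
    exact ((hAp.sub (((continuous_trunc Mn).measurable).comp hAp)).pow_const 2).ennreal_ofReal
  have hsq_le : ∀ (Mc x : ℝ), 0 ≤ Mc → (x - trunc Mc x)^2 ≤ x^2 := by
    intro Mc x hMc
    have h1 := abs_sub_trunc_le Mc x hMc
    nlinarith [sq_abs (x - trunc Mc x), sq_abs x, abs_nonneg (x - trunc Mc x), abs_nonneg x]
  have hJle : ∀ (Mn : ℕ) ω, J Mn ω ≤ B ω := fun Mn ω =>
    lintegral_mono fun s => ENNReal.ofReal_le_ofReal (hsq_le _ _ (Nat.cast_nonneg Mn))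
  have hJlim : ∀ᵐ ω ∂P, Tendsto (fun Mn : ℕ => J Mn ω) atTop (𝓝 0) := by
    filter_upwards [ae_lt_top hBmeas hB_lt.ne] with ω hω
    have h0 : Tendsto (fun Mn : ℕ => J Mn ω) atTop
        (𝓝 (∫⁻ s in Ioc t₀ t, (0:ℝ≥0∞))) := by
      apply tendsto_lintegral_of_dominated_convergence
        (bound := fun s => ENNReal.ofReal ((Ap (ω,s))^2))
      · intro Mn
        exact (((hAp.comp measurable_prodMk_left).sub
          (((continuous_trunc Mn).measurable).comp
            (hAp.comp measurable_prodMk_left))).pow_const 2).ennreal_ofReal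
      · intro Mn
        exact ae_of_all _ fun s => ENNReal.ofReal_le_ofReal (hsq_le _ _ (Nat.cast_nonneg Mn))
      · exact hω.ne
      · apply ae_of_all
        intro s
        have hev : ∀ᶠ Mn : ℕ in atTop,
            ENNReal.ofReal ((Ap (ω,s) - trunc Mn (Ap (ω,s)))^2) = 0 := by
          obtain ⟨M0, hM0⟩ := exists_nat_ge |Ap (ω,s)|
          filter_upwards [eventually_ge_atTop M0] with Mn hMn
          have ht : trunc (Mn:ℝ) (Ap (ω,s)) = Ap (ω,s) :=
            trunc_eq_self (le_trans hM0 (Nat.cast_le.2 hMn))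
          simp [ht]
        exact Tendsto.congr' (hev.mono fun Mn hm => hm.symm) tendsto_const_nhds
    simpa using h0
  have hE1 : Tendsto (fun Mn : ℕ => ∫⁻ ω, J Mn ω ∂P) atTop (𝓝 0) := by
    have h0 : Tendsto (fun Mn : ℕ => ∫⁻ ω, J Mn ω ∂P) atTop (𝓝 (∫⁻ _, (0:ℝ≥0∞) ∂P)) :=
      tendsto_lintegral_of_dominated_convergence B hJmeas
        (fun Mn => ae_of_all _ (hJle Mn)) hB_lt.ne hJlim
    simpa using h0
  have hε9 : (0:ℝ≥0∞) < ENNReal.ofReal (ε/9) := ENNReal.ofReal_pos.2 (by linarith)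
  obtain ⟨M, hM⟩ := (hE1.eventually_lt_const hε9).exists
  set MR : ℝ := (M : ℝ) with hMRdef
  have hMR : 0 ≤ MR := Nat.cast_nonneg M
  -- truncated bounded process
  set fI : Ω → ℝ → ℝ := fun ω => (Ioc t₀ t).indicator (fun u => trunc MR (Ap (ω,u)))
    with hfIdef
  have hfI_bdd : ∀ ω u, |fI ω u| ≤ MR := by
    intro ω u
    rw [hfIdef]
    simp only
    by_cases hu : u ∈ Ioc t₀ t
    · rw [Set.indicator_of_mem hu]; exact abs_trunc_le hMR _
    · rw [Set.indicator_of_notMem hu]; simpa using hMR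
  have hfI_joint : Measurable fun q : Ω × ℝ => fI q.1 q.2 := by
    have heq : (fun q : Ω × ℝ => fI q.1 q.2)
        = fun q : Ω × ℝ => (Prod.snd ⁻¹' (Ioc t₀ t)).indicator
            (fun q : Ω × ℝ => trunc MR (Ap q)) q := by
      rw [← indicator_comp_snd (Ioc t₀ t) (fun q : Ω × ℝ => trunc MR (Ap q))]
    rw [heq]
    exact ((continuous_trunc MR).measurable.comp hAp).indicator
      (measurableSet_Ioc.preimage measurable_snd)
  have hfI_sec : ∀ ω, Measurable (fI ω) := fun ω =>
    hfI_joint.comp measurable_prodMk_left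
  have hfin_restrict : IsFiniteMeasure (volume.restrict (Ioc t₀ t)) := by
    constructor
    rw [Measure.restrict_apply_univ, Real.volume_Ioc]
    exact ENNReal.ofReal_lt_top
  have hfI_int : ∀ ω, Integrable (fI ω) := by
    intro ω
    rw [hfIdef]
    simp only
    rw [integrable_indicator_iff measurableSet_Ioc]
    haveI := hfin_restrict
    apply Integrable.mono' (integrable_const MR)
    · exact ((continuous_trunc MR).measurable.comp
        (hAp.comp measurable_prodMk_left)).aestronglyMeasurable
    · exact ae_of_all _ fun u => by
        rw [Real.norm_eq_abs]; exact abs_trunc_le hMR _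
  -- averaging errors
  set Kf : ℕ → Ω → ℝ≥0∞ := fun n ω =>
    ∫⁻ s in Ioc t₀ t, ENNReal.ofReal ((fI ω s - avg (fI ω) (hseq n) s)^2) with hKdef
  have havg_joint : ∀ n : ℕ, Measurable fun q : Ω × ℝ => avg (fI q.1) (hseq n) q.2 :=
    fun n => measurable_avg_joint hfI_joint (hseq_pos n)
  have hKmeas : ∀ n, Measurable (Kf n) := by
    intro n
    apply Measurable.lintegral_prod_right
    exact ((hfI_joint.sub (havg_joint n)).pow_const 2).ennreal_ofReal
  have havg_bdd : ∀ (hv : ℝ), 0 < hv → ∀ ω s, |avg (fI ω) hv s| ≤ MR := fun hv hhv ω s =>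
    abs_avg_le (hfI_int ω) (hfI_bdd ω) hhv s
  have hsqd : ∀ x y : ℝ, |x| ≤ MR → |y| ≤ MR → (x - y)^2 ≤ (2*MR)^2 := by
    intro x y hx hy
    rw [abs_le] at hx hy
    nlinarith [hx.1, hx.2, hy.1, hy.2]
  set Cb : ℝ≥0∞ := ENNReal.ofReal ((2*MR)^2) * volume (Ioc t₀ t) with hCbdef
  have hCb_ne : Cb ≠ ⊤ := by
    rw [hCbdef, Real.volume_Ioc]
    exact ENNReal.mul_ne_top ENNReal.ofReal_ne_top ENNReal.ofReal_ne_top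
  have hK_le : ∀ n ω, Kf n ω ≤ Cb := by
    intro n ω
    rw [hKdef, hCbdef]
    simp only
    calc ∫⁻ s in Ioc t₀ t, ENNReal.ofReal ((fI ω s - avg (fI ω) (hseq n) s)^2)
        ≤ ∫⁻ _ in Ioc t₀ t, ENNReal.ofReal ((2*MR)^2) :=
          lintegral_mono fun s => ENNReal.ofReal_le_ofReal
            (hsqd _ _ (hfI_bdd ω s) (havg_bdd _ (hseq_pos n) ω s))
      _ = ENNReal.ofReal ((2*MR)^2) * volume (Ioc t₀ t) := setLIntegral_const _ _
  have hKlim : ∀ ω, Tendsto (fun n => Kf n ω) atTop (𝓝 0) := by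
    intro ω
    have h0 : Tendsto (fun n => Kf n ω) atTop (𝓝 (∫⁻ _ in Ioc t₀ t, (0:ℝ≥0∞))) := by
      apply tendsto_lintegral_of_dominated_convergence
        (bound := fun _ => ENNReal.ofReal ((2*MR)^2))
      · intro n
        exact (((hfI_sec ω).sub
          ((havg_joint n).comp measurable_prodMk_left)).pow_const 2).ennreal_ofReal
      · intro n
        exact ae_of_all _ fun s => ENNReal.ofReal_le_ofReal
          (hsqd _ _ (hfI_bdd ω s) (havg_bdd _ (hseq_pos n) ω s))
      · rw [setLIntegral_const, Real.volume_Ioc]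
        exact ENNReal.mul_ne_top ENNReal.ofReal_ne_top ENNReal.ofReal_ne_top
      · have hres : ∀ᵐ s ∂(volume.restrict (Ioc t₀ t)),
            Tendsto (fun n => avg (fI ω) (hseq n) s) atTop (𝓝 (fI ω s)) :=
          ae_restrict_of_ae (ae_tendsto_avg (hfI_int ω))
        filter_upwards [hres] with s hs
        have hc : Continuous fun a : ℝ => ENNReal.ofReal ((fI ω s - a)^2) :=
          ENNReal.continuous_ofReal.comp ((continuous_const.sub continuous_id).pow 2)
        have h2 := (hc.tendsto (fI ω s)).comp hs
        simpa [Function.comp_def] using h2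
    simpa using h0
  have hE2 : Tendsto (fun n => ∫⁻ ω, Kf n ω ∂P) atTop (𝓝 0) := by
    have h0 : Tendsto (fun n => ∫⁻ ω, Kf n ω ∂P) atTop (𝓝 (∫⁻ _, (0:ℝ≥0∞) ∂P)) := by
      apply tendsto_lintegral_of_dominated_convergence (bound := fun _ => Cb) hKmeas
        (fun n => ae_of_all _ fun ω => hK_le n ω)
      · rw [lintegral_const, measure_univ, mul_one]; exact hCb_ne
      · exact ae_of_all _ hKlim
    simpa using h0
  obtain ⟨n₀, hn₀⟩ := (hE2.eventually_lt_const hε9).exists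
  set hh : ℝ := hseq n₀ with hhdef
  have hhpos : 0 < hh := hseq_pos n₀
  -- choice of the mesh
  set T3 : ℕ → ℝ≥0∞ := fun k =>
    ENNReal.ofReal ((2*MR*((t - t₀)/k)/hh)^2) * ENNReal.ofReal (t - t₀) with hT3def
  have hT3lim : Tendsto T3 atTop (𝓝 0) := by
    have h1 : Tendsto (fun k : ℕ => (t - t₀)/(k:ℝ)) atTop (𝓝 0) :=
      tendsto_const_div_atTop_nhds_zero_nat _
    have h2 : Continuous fun d : ℝ => ENNReal.ofReal ((2*MR*d/hh)^2) :=
      ENNReal.continuous_ofReal.comp (((continuous_const.mul continuous_id).div_const hh).pow 2)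
    have h3 := (h2.tendsto 0).comp h1
    have h4 : ENNReal.ofReal ((2*MR*(0:ℝ)/hh)^2) = 0 := by norm_num
    rw [h4] at h3
    have h5 := ENNReal.Tendsto.mul_const (b := ENNReal.ofReal (t - t₀)) h3 (Or.inr ENNReal.ofReal_ne_top)
    simpa [hT3def] using h5
  obtain ⟨k, hkprop⟩ := ((hT3lim.eventually_lt_const hε9).and (eventually_ge_atTop 1)).exists
  obtain ⟨hk3, hk1⟩ := hkprop
  have hk0 : 0 < k := hk1
  have hkR : (0:ℝ) < k := by exact_mod_cast hk0
  set δ : ℝ := (t - t₀)/k with hδdef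
  have hδpos : 0 < δ := div_pos (by linarith) hkR
  set pt : ℕ → ℝ := fun i => t₀ + i * δ with hptdef
  have hpt0 : ∀ i : ℕ, 0 ≤ pt i := fun i => by
    rw [hptdef]
    have : (0:ℝ) ≤ (i:ℝ) * δ := mul_nonneg (Nat.cast_nonneg i) hδpos.le
    simp only
    linarith
  have hptsucc : ∀ i : ℕ, pt (i+1) = pt i + δ := by
    intro i; rw [hptdef]; push_cast; ring
  have hptmono : ∀ i : ℕ, pt i < pt (i+1) := fun i => by
    rw [hptsucc i]; linarith
  have hptSM : StrictMono pt := strictMono_nat_of_lt_succ hptmono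
  have hptk : pt k = t := by
    rw [hptdef, hδdef]
    field_simp
    ring
  have hpt_le_t : ∀ i, i ≤ k → pt i ≤ t := fun i hi => by
    rw [← hptk]; exact hptSM.monotone hi
  -- adapted coefficients
  set e : ℕ → Ω → ℝ := fun i ω => hh⁻¹ * ∫ v in Ioc (pt i - hh) (pt i),
      (Ioc t₀ (min t (pt i))).indicator
        (fun v => trunc MR (X (Set.projIcc 0 (pt i) (hpt0 i) v) ω)) v with hedef
  have he_meas : ∀ i, Measurable[F (pt i)] (e i) := fun i =>
    adapted_e_meas (mΩ := F (pt i)) (hpt0 i) (hprog (pt i) (hpt0 i)) MR _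
      measurableSet_Ioc _ _
  have he_avg : ∀ i, i ≤ k → ∀ ω, e i ω = avg (fI ω) hh (pt i) := by
    intro i hik ω
    rw [hedef, avg]
    simp only
    congr 1
    apply setIntegral_congr_fun measurableSet_Ioc
    intro v hv
    have hvle : v ≤ pt i := hv.2
    by_cases hmem : v ∈ Ioc t₀ t
    · have hvmem2 : v ∈ Ioc t₀ (min t (pt i)) := ⟨hmem.1, le_min hmem.2 hvle⟩
      rw [Set.indicator_of_mem hvmem2]
      rw [hfIdef]
      simp only
      rw [Set.indicator_of_mem hmem]
      have hv0 : (0:ℝ) ≤ v := le_trans ht₀ hmem.1.le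
      have h1 : Set.projIcc 0 (pt i) (hpt0 i) v = ⟨v, ⟨hv0, hvle⟩⟩ :=
        Set.projIcc_of_mem _ ⟨hv0, hvle⟩
      have h2 : Ap (ω, v) = X v ω := hApt ω ⟨hv0, hmem.2⟩
      rw [h1, h2]
    · have hnot : v ∉ Ioc t₀ (min t (pt i)) := fun hc =>
        hmem ⟨hc.1, le_trans hc.2 (min_le_left _ _)⟩
      rw [Set.indicator_of_notMem hnot]
      rw [hfIdef]
      simp only
      rw [Set.indicator_of_notMem hmem]
  have he_bdd : ∀ i, i ≤ k → ∀ ω, |e i ω| ≤ MR := fun i hi ω => by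
    rw [he_avg i hi ω]; exact abs_avg_le (hfI_int ω) (hfI_bdd ω) hhpos _
  set Yn : ℝ → Ω → ℝ := fun s ω => ∑ i ∈ Finset.range k,
      (Set.Ico (pt i) (pt (i+1))).indicator (fun _ => e i ω) s with hYdef
  have hY_val : ∀ (s : ℝ) (ω : Ω) (j : ℕ), j < k → s ∈ Ico (pt j) (pt (j+1)) →
      Yn s ω = e j ω := by
    intro s ω j hj hsj
    rw [hYdef]
    simp only
    rw [Finset.sum_eq_single_of_mem j (Finset.mem_range.2 hj)]
    · exact Set.indicator_of_mem hsj _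
    · intro i _ hne
      apply Set.indicator_of_notMem
      intro hsi
      rcases lt_or_gt_of_ne hne with hlt | hgt
      · have h1 : pt (i+1) ≤ pt j := hptSM.monotone hlt
        have := hsi.2
        have := hsj.1
        linarith
      · have h1 : pt (j+1) ≤ pt i := hptSM.monotone hgt
        have := hsj.2
        have := hsi.1
        linarith
  have hY_bdd : ∀ s ω, |Yn s ω| ≤ MR := by
    intro s ω
    by_cases hs : ∃ j, j < k ∧ s ∈ Ico (pt j) (pt (j+1))
    · obtain ⟨j, hj, hsj⟩ := hs
      rw [hY_val s ω j hj hsj]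
      exact he_bdd j hj.le ω
    · push_neg at hs
      have : Yn s ω = 0 := by
        rw [hYdef]
        simp only
        apply Finset.sum_eq_zero
        intro i hi
        exact Set.indicator_of_notMem (hs i (Finset.mem_range.1 hi)) _
      rw [this]; simpa using hMR
  have hYfin : ∫⁻ ω, (∫⁻ s in Set.Ioc t₀ t, ENNReal.ofReal ((Yn s ω)^2)) ∂P < ⊤ := by
    have hbd : ∀ ω, (∫⁻ s in Set.Ioc t₀ t, ENNReal.ofReal ((Yn s ω)^2))
        ≤ ENNReal.ofReal (MR^2) * volume (Ioc t₀ t) := by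
      intro ω
      calc (∫⁻ s in Set.Ioc t₀ t, ENNReal.ofReal ((Yn s ω)^2))
          ≤ ∫⁻ _ in Set.Ioc t₀ t, ENNReal.ofReal (MR^2) :=
            lintegral_mono fun s => ENNReal.ofReal_le_ofReal
              (by nlinarith [hY_bdd s ω, abs_nonneg (Yn s ω), sq_abs (Yn s ω)])
        _ = _ := setLIntegral_const _ _
    calc ∫⁻ ω, (∫⁻ s in Set.Ioc t₀ t, ENNReal.ofReal ((Yn s ω)^2)) ∂P
        ≤ ∫⁻ _, ENNReal.ofReal (MR^2) * volume (Ioc t₀ t) ∂P := lintegral_mono hbd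
      _ = ENNReal.ofReal (MR^2) * volume (Ioc t₀ t) := by
          rw [lintegral_const, measure_univ, mul_one]
      _ < ⊤ := by
          rw [Real.volume_Ioc]
          exact ENNReal.mul_lt_top ENNReal.ofReal_lt_top ENNReal.ofReal_lt_top
  -- pointwise error estimate
  set c3 : ℝ := 2*MR*δ/hh with hc3def
  have hc3nn : 0 ≤ c3 := by
    rw [hc3def]
    apply div_nonneg _ hhpos.le
    apply mul_nonneg _ hδpos.le
    linarith
  have hptwise : ∀ (ω : Ω), ∀ s ∈ Ioo t₀ t,
      ENNReal.ofReal ((X s ω - Yn s ω)^2) ≤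
      3 * (ENNReal.ofReal ((Ap (ω,s) - trunc MR (Ap (ω,s)))^2)
        + ENNReal.ofReal ((fI ω s - avg (fI ω) hh s)^2)
        + ENNReal.ofReal (c3^2)) := by
    intro ω s hs
    -- locate the interval
    set i : ℕ := ⌊(s - t₀)/δ⌋₊ with hidef
    have hnn : 0 ≤ (s - t₀)/δ := div_nonneg (by linarith [hs.1]) hδpos.le
    have hik : i < k := by
      rw [hidef]
      apply (Nat.floor_lt hnn).2
      rw [div_lt_iff₀ hδpos]
      have hkδ : (k:ℝ) * δ = t - t₀ := by rw [hδdef]; field_simp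
      linarith [hs.2, hkδ]
    have hil : pt i ≤ s := by
      have h1 := Nat.floor_le hnn
      have h2 : (i:ℝ) * δ ≤ (s - t₀)/δ * δ :=
        mul_le_mul_of_nonneg_right h1 hδpos.le
      rw [div_mul_cancel₀ _ hδpos.ne'] at h2
      rw [hptdef]; simp only; linarith
    have hiu : s < pt (i+1) := by
      have h1 := Nat.lt_floor_add_one ((s - t₀)/δ)
      rw [hptdef]
      push_cast
      have h2 : s - t₀ < ((i:ℝ) + 1) * δ := by
        rw [← div_lt_iff₀ hδpos] at *
        · exact lt_of_lt_of_le h1 (by rw [hidef])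
      linarith
    have hYv : Yn s ω = e i ω := hY_val s ω i hik ⟨hil, hiu⟩
    have hsIoc : s ∈ Ioc t₀ t := ⟨hs.1, hs.2.le⟩
    have hXA2 : X s ω = Ap (ω, s) := (hApt ω (hmemIcc s hsIoc)).symm
    have hfIs : fI ω s = trunc MR (Ap (ω, s)) := by
      rw [hfIdef]; simp only; exact Set.indicator_of_mem hsIoc _
    have heq : X s ω - Yn s ω = (Ap (ω,s) - trunc MR (Ap (ω,s)))
        + (fI ω s - avg (fI ω) hh s) + (avg (fI ω) hh s - avg (fI ω) hh (pt i)) := by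
      rw [hXA2, hYv, he_avg i hik.le ω, hfIs]; ring
    have habs3 : |avg (fI ω) hh s - avg (fI ω) hh (pt i)| ≤ c3 := by
      have hb := abs_avg_sub_avg_le (hfI_int ω) (hfI_bdd ω) hhpos s (pt i)
      have hd : |s - pt i| ≤ δ := by
        rw [abs_of_nonneg (by linarith)]
        have := hptsucc i
        linarith
      calc |avg (fI ω) hh s - avg (fI ω) hh (pt i)| ≤ 2*MR*|s - pt i|/hh := hb
        _ ≤ c3 := by
            rw [hc3def]
            exact (div_le_div_iff_of_pos_right hhpos).2 (mul_le_mul_of_nonneg_left hd (by linarith))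
    have habs : |X s ω - Yn s ω| ≤ |Ap (ω,s) - trunc MR (Ap (ω,s))|
        + |fI ω s - avg (fI ω) hh s| + c3 := by
      rw [heq]
      have h1 := abs_add_le (Ap (ω,s) - trunc MR (Ap (ω,s)) + (fI ω s - avg (fI ω) hh s))
        (avg (fI ω) hh s - avg (fI ω) hh (pt i))
      have h2 := abs_add_le (Ap (ω,s) - trunc MR (Ap (ω,s))) (fI ω s - avg (fI ω) hh s)
      linarith [habs3]
    have hsq := sq_le_three_sq (abs_nonneg _) (abs_nonneg _) hc3nn habs
    rw [sq_abs, sq_abs] at hsq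
    calc ENNReal.ofReal ((X s ω - Yn s ω)^2)
        ≤ ENNReal.ofReal (3*((Ap (ω,s) - trunc MR (Ap (ω,s)))^2
            + (fI ω s - avg (fI ω) hh s)^2 + c3^2)) := ENNReal.ofReal_le_ofReal hsq
      _ = 3 * (ENNReal.ofReal ((Ap (ω,s) - trunc MR (Ap (ω,s)))^2)
            + ENNReal.ofReal ((fI ω s - avg (fI ω) hh s)^2)
            + ENNReal.ofReal (c3^2)) := by
          rw [ENNReal.ofReal_mul (by norm_num : (0:ℝ) ≤ 3),
            ENNReal.ofReal_add (by positivity) (by positivity),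
            ENNReal.ofReal_add (by positivity) (by positivity)]
          norm_num
  -- integrate the error estimate
  have hγvol : ENNReal.ofReal (c3^2) * volume (Ioc t₀ t) = T3 k := by
    rw [hT3def, Real.volume_Ioc, hc3def, hδdef]
  have hinner : ∀ ω, (∫⁻ s in Set.Ioc t₀ t, ENNReal.ofReal ((X s ω - Yn s ω)^2))
      ≤ 3 * (J M ω + Kf n₀ ω + ENNReal.ofReal (c3^2) * volume (Ioc t₀ t)) := by
    intro ω
    have hmeasα : Measurable fun s => ENNReal.ofReal ((Ap (ω,s) - trunc MR (Ap (ω,s)))^2) :=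
      (((hAp.comp measurable_prodMk_left).sub
        (((continuous_trunc MR).measurable).comp
          (hAp.comp measurable_prodMk_left))).pow_const 2).ennreal_ofReal
    calc (∫⁻ s in Set.Ioc t₀ t, ENNReal.ofReal ((X s ω - Yn s ω)^2))
        = ∫⁻ s in Set.Ioo t₀ t, ENNReal.ofReal ((X s ω - Yn s ω)^2) :=
          (setLIntegral_congr Ioo_ae_eq_Ioc).symm
      _ ≤ ∫⁻ s in Set.Ioo t₀ t,
            3 * (ENNReal.ofReal ((Ap (ω,s) - trunc MR (Ap (ω,s)))^2)
              + ENNReal.ofReal ((fI ω s - avg (fI ω) hh s)^2)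
              + ENNReal.ofReal (c3^2)) := by
          apply lintegral_mono_ae
          filter_upwards [ae_restrict_mem measurableSet_Ioo] with s hs
          exact hptwise ω s hs
      _ = ∫⁻ s in Set.Ioc t₀ t,
            3 * (ENNReal.ofReal ((Ap (ω,s) - trunc MR (Ap (ω,s)))^2)
              + ENNReal.ofReal ((fI ω s - avg (fI ω) hh s)^2)
              + ENNReal.ofReal (c3^2)) := setLIntegral_congr Ioo_ae_eq_Ioc
      _ = 3 * (J M ω + Kf n₀ ω + ENNReal.ofReal (c3^2) * volume (Ioc t₀ t)) := by
          rw [lintegral_const_mul' _ _ (by norm_num : (3:ℝ≥0∞) ≠ ⊤)]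
          congr 1
          rw [lintegral_add_right _ measurable_const]
          rw [lintegral_add_left hmeasα]
          rw [setLIntegral_const]
  have houter : ∫⁻ ω, (∫⁻ s in Set.Ioc t₀ t, ENNReal.ofReal ((X s ω - Yn s ω)^2)) ∂P
      ≤ 3 * ((∫⁻ ω, J M ω ∂P) + (∫⁻ ω, Kf n₀ ω ∂P)
          + ENNReal.ofReal (c3^2) * volume (Ioc t₀ t)) := by
    calc ∫⁻ ω, (∫⁻ s in Set.Ioc t₀ t, ENNReal.ofReal ((X s ω - Yn s ω)^2)) ∂P
        ≤ ∫⁻ ω, 3 * (J M ω + Kf n₀ ω + ENNReal.ofReal (c3^2) * volume (Ioc t₀ t)) ∂P :=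
          lintegral_mono hinner
      _ = _ := by
          rw [lintegral_const_mul' _ _ (by norm_num : (3:ℝ≥0∞) ≠ ⊤)]
          congr 1
          rw [lintegral_add_right _ measurable_const, lintegral_add_left (hJmeas M),
            lintegral_const, measure_univ, mul_one]
  have hfinal : ∫⁻ ω, (∫⁻ s in Set.Ioc t₀ t, ENNReal.ofReal ((X s ω - Yn s ω)^2)) ∂P
      < ENNReal.ofReal ε := by
    calc ∫⁻ ω, (∫⁻ s in Set.Ioc t₀ t, ENNReal.ofReal ((X s ω - Yn s ω)^2)) ∂P
        ≤ 3 * ((∫⁻ ω, J M ω ∂P) + (∫⁻ ω, Kf n₀ ω ∂P)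
            + ENNReal.ofReal (c3^2) * volume (Ioc t₀ t)) := houter
      _ < 3 * (ENNReal.ofReal (ε/9) + ENNReal.ofReal (ε/9) + ENNReal.ofReal (ε/9)) := by
          apply ENNReal.mul_lt_mul_right (by norm_num) (by norm_num)
          exact ENNReal.add_lt_add (ENNReal.add_lt_add hM hn₀) (hγvol ▸ hk3)
      _ = ENNReal.ofReal ε := by
          rw [← ENNReal.ofReal_add (by positivity) (by positivity),
            ← ENNReal.ofReal_add (by positivity) (by positivity)]
          rw [show (3:ℝ≥0∞) = ENNReal.ofReal 3 by simp,
            ← ENNReal.ofReal_mul (by norm_num : (0:ℝ) ≤ 3)]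
          congr 1
          ring
  refine ⟨Yn, ⟨k, pt, e, hk0, ?_, hptk, fun i _ => hptmono i, fun i _ => he_meas i,
    fun s ω => rfl⟩, hYfin, hfinal⟩
  rw [hptdef]; simp


/-- Approximation by adapted step processes in `L²(Ω × [t₀,t])`: if
`E ∫_{t₀}^{t} |X_s|² ds < ∞`, there are adapted step processes `Xⁿ`, each with
`E ∫_{t₀}^{t} |Xⁿ_s|² ds < ∞`, such that `E ∫_{t₀}^{t} |X_s − Xⁿ_s|² ds → 0`. -/
theorem approx_by_adapted_step_processes_L2
    {Ω : Type*} {m : MeasurableSpace Ω} {P : Measure Ω} [IsProbabilityMeasure P]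
    (F : Filtration ℝ m) (t₀ t : ℝ) (ht₀ : 0 ≤ t₀) (htt : t₀ < t)
    (X : ℝ → Ω → ℝ)
    (hprog : ∀ u : ℝ, 0 ≤ u →
      Measurable[(inferInstance : MeasurableSpace (Set.Icc (0:ℝ) u)).prod (F u)]
        (fun p : Set.Icc (0:ℝ) u × Ω => X (↑p.1) p.2))
    (hX : ∫⁻ ω, (∫⁻ s in Set.Ioc t₀ t, ENNReal.ofReal ((X s ω) ^ 2)) ∂P < ⊤) :
    ∃ Y : ℕ → ℝ → Ω → ℝ,
      (∀ n, ∃ (k : ℕ) (pt : ℕ → ℝ) (e : ℕ → Ω → ℝ),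
        0 < k ∧ pt 0 = t₀ ∧ pt k = t ∧ (∀ i < k, pt i < pt (i + 1)) ∧
        (∀ i < k, Measurable[F (pt i)] (e i)) ∧
        (∀ s ω, Y n s ω =
          ∑ i ∈ Finset.range k,
            Set.indicator (Set.Ico (pt i) (pt (i + 1))) (fun _ => e i ω) s)) ∧
      (∀ n, ∫⁻ ω, (∫⁻ s in Set.Ioc t₀ t, ENNReal.ofReal ((Y n s ω) ^ 2)) ∂P < ⊤) ∧
      Tendsto
        (fun n => ∫⁻ ω,
          (∫⁻ s in Set.Ioc t₀ t, ENNReal.ofReal ((X s ω - Y n s ω) ^ 2)) ∂P)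
        atTop (𝓝 0) := by
  have key := fun n : ℕ => key_step F t₀ t ht₀ htt X hprog hX (hseq n) (hseq_pos n)
  choose Y hstep hfin herr using key
  refine ⟨Y, hstep, hfin, ?_⟩
  have hupper : Tendsto (fun n : ℕ => ENNReal.ofReal (hseq n)) atTop (𝓝 0) := by
    have h1 := ENNReal.tendsto_ofReal (m := hseq) hseq_tendsto
    simpa using h1
  apply tendsto_of_tendsto_of_tendsto_of_le_of_le (g := fun _ => (0:ℝ≥0∞))
    (h := fun n => ENNReal.ofReal (hseq n)) tendsto_const_nhds hupper
    (fun n => zero_le) (fun n => (herr n).le)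
end
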